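/- The circulant digraph C₇(1,2) on vertex set ZMod 7, with arcs (i, i+1) and (i, i+2) for all i, is a strongly connected digraph on 7 vertices containing no directed cycle of length 2 or 3, in which every vertex has out-degree exactly 2 and in-degree exactly 2. -/

import Mathlib

open scoped Classical

noncomputable section

/-- `D` has a directed cycle of length `ℓ`: `ℓ` distinct vertices cyclically joined by arcs. -/
def HasDicycle {V : Type*} (A : V → V → Prop) (ℓ : ℕ) : Prop :=
  ∃ c : ZMod ℓ → V, Function.Injective c ∧ ∀ i, A (c i) (c (i + 1))

/-- Strong connectivity: every vertex reachable from every vertex. -/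
def Strong {V : Type*} (A : V → V → Prop) : Prop :=
  ∀ u v : V, Relation.ReflTransGen A u v

def outDeg {V : Type*} [Fintype V] (A : V → V → Prop) (v : V) : ℕ :=
  (Finset.univ.filter fun u => A v u).card

def inDeg {V : Type*} [Fintype V] (A : V → V → Prop) (v : V) : ℕ :=
  (Finset.univ.filter fun u => A u v).card

def arcs {V : Type*} [Fintype V] (A : V → V → Prop) : ℕ :=
  (Finset.univ.filter fun p : V × V => A p.1 p.2).card

/-- The circulant digraph C₇(1,2) on `ZMod 7`. -/
def C7 (i j : ZMod 7) : Prop := j = i + 1 ∨ j = i + 2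

lemma reach_add (u : ZMod 7) (n : ℕ) : Relation.ReflTransGen C7 u (u + n) := by
  induction n with
  | zero => simpa using Relation.ReflTransGen.refl
  | succ k ih =>
      refine ih.tail (Or.inl ?_)
      push_cast
      ring

theorem stmt1 :
    Fintype.card (ZMod 7) = 7 ∧
    (∀ i, ¬ C7 i i) ∧
    Strong C7 ∧
    ¬ HasDicycle C7 2 ∧ ¬ HasDicycle C7 3 ∧
    (∀ v, outDeg C7 v = 2 ∧ inDeg C7 v = 2) := by
  refine ⟨rfl, ?_, ?_, ?_, ?_, ?_⟩
  · intro i h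
    rcases h with h | h
    · exact absurd (by linear_combination h : (0 : ZMod 7) = 1) (by decide)
    · exact absurd (by linear_combination h : (0 : ZMod 7) = 2) (by decide)
  · intro u v
    have := reach_add u (v - u).val
    rwa [ZMod.natCast_val, ZMod.cast_id, add_sub_cancel] at this
  · rintro ⟨c, hinj, harc⟩
    have h0 := harc 0
    have h1 := harc 1
    have e : (1 : ZMod 2) + 1 = 0 := by decide
    rw [e] at h1; norm_num at h0
    rcases h0 with h0 | h0 <;> rcases h1 with h1 | h1 <;>
      · rw [h0] at h1
        apply_fun (· - c 0) at h1
        ring_nf at h1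
        revert h1; decide
  · rintro ⟨c, hinj, harc⟩
    have h0 := harc 0
    have h1 := harc 1
    have h2 := harc 2
    have e : (2 : ZMod 3) + 1 = 0 := by decide
    rw [e] at h2; norm_num at h0 h1
    rcases h0 with h0 | h0 <;> rcases h1 with h1 | h1 <;> rcases h2 with h2 | h2 <;>
      · rw [h0] at h1; rw [h1] at h2
        apply_fun (· - c 0) at h2
        ring_nf at h2
        revert h2; decide
  · intro v
    constructor
    · have : (Finset.univ.filter fun u => C7 v u) = {v + 1, v + 2} := by
        ext u
        rw [Finset.mem_filter]
        simp [C7]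
      rw [outDeg, this, Finset.card_insert_of_notMem (by
        simp; intro h; exact absurd (by linear_combination h : (1:ZMod 7) = 2) (by decide)),
        Finset.card_singleton]
    · have : (Finset.univ.filter fun u => C7 u v) = {v - 1, v - 2} := by
        ext u
        rw [Finset.mem_filter]
        simp only [Finset.mem_filter, Finset.mem_univ, true_and, C7, Finset.mem_insert,
          Finset.mem_singleton]
        constructor
        · rintro (h | h) <;> [left; right] <;> linear_combination -h
        · rintro (h | h) <;> [left; right] <;> linear_combination -h
      rw [inDeg, this, Finset.card_insert_of_notMem (by
        simp; intro h; exact absurd (by linear_combination h : (1:ZMod 7) = 2) (by decide)),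
        Finset.card_singleton]
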